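/- In the second Heisenberg group ℍ², for the bubble set given as the graph t = φ(r) with φ(r) = (L²π/8) − (L²/4) arctan(r/√(L²−r²)) + (r/4)√(L²−r²) for 0 ≤ r < L, the horizontal gradient norm of the defining function satisfies W := √(Σ_j ((X_jφ)² + (Y_jφ)²)) = Lr / (2√(L²−r²)), where r² = Σ_{j=1}^2 (x_j² + y_j²) and X_j = ∂_{x_j} − (y_j/2)∂_t, Y_j = ∂_{y_j} + (x_j/2)∂_t. -/

import Mathlib

open Real

/-- The radial coordinate r on ℍ² = ℝ⁴ × ℝ (coordinates ((x_j),(y_j),t)). -/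
noncomputable def heisR (p : (Fin 2 → ℝ) × (Fin 2 → ℝ) × ℝ) : ℝ :=
  Real.sqrt (∑ j : Fin 2, ((p.1 j) ^ 2 + (p.2.1 j) ^ 2))

/-- The bubble profile φ(r). -/
noncomputable def bubbleProfile (L : ℝ) (r : ℝ) : ℝ :=
  L ^ 2 * π / 8 - L ^ 2 / 4 * Real.arctan (r / Real.sqrt (L ^ 2 - r ^ 2))
    + r / 4 * Real.sqrt (L ^ 2 - r ^ 2)

/-- The defining function ψ = t − φ(r) of the upper bubble graph. -/
noncomputable def bubbleDefFn (L : ℝ) (p : (Fin 2 → ℝ) × (Fin 2 → ℝ) × ℝ) : ℝ :=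
  p.2.2 - bubbleProfile L (heisR p)

/-- The horizontal vector field X_j = ∂_{x_j} − (y_j/2)∂_t at p, as a direction. -/
noncomputable def heisXdir (j : Fin 2) (p : (Fin 2 → ℝ) × (Fin 2 → ℝ) × ℝ) :
    (Fin 2 → ℝ) × (Fin 2 → ℝ) × ℝ :=
  (Pi.single j 1, 0, -(p.2.1 j) / 2)

/-- The horizontal vector field Y_j = ∂_{y_j} + (x_j/2)∂_t at p, as a direction. -/
noncomputable def heisYdir (j : Fin 2) (p : (Fin 2 → ℝ) × (Fin 2 → ℝ) × ℝ) :
    (Fin 2 → ℝ) × (Fin 2 → ℝ) × ℝ :=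
  (0, Pi.single j 1, (p.1 j) / 2)

lemma bubbleProfile_hasDerivAt (L r : ℝ) (h0 : 0 < r) (hrL : r < L) :
    HasDerivAt (bubbleProfile L) (-(r ^ 2) / (2 * Real.sqrt (L ^ 2 - r ^ 2))) r := by
  have hpos : 0 < L ^ 2 - r ^ 2 := by nlinarith
  set s := Real.sqrt (L ^ 2 - r ^ 2) with hs
  have hspos : 0 < s := Real.sqrt_pos.mpr hpos
  have hs2 : s ^ 2 = L ^ 2 - r ^ 2 := Real.sq_sqrt hpos.le
  have hinner : HasDerivAt (fun x : ℝ => L ^ 2 - x ^ 2) (-(2 * r)) r := by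
    simpa using ((hasDerivAt_pow 2 r).const_sub (L ^ 2))
  have hsqrt : HasDerivAt (fun x : ℝ => Real.sqrt (L ^ 2 - x ^ 2))
      (-(2 * r) / (2 * s)) r := by
    have := (Real.hasDerivAt_sqrt (x := L ^ 2 - r ^ 2) (by positivity)).comp r hinner
    simpa [div_eq_mul_inv, mul_comm, Function.comp_def, ← hs] using this
  have hu : HasDerivAt (fun x : ℝ => x / Real.sqrt (L ^ 2 - x ^ 2))
      ((1 * s - r * (-(2 * r) / (2 * s))) / s ^ 2) r :=
    (hasDerivAt_id r).div hsqrt (ne_of_gt hspos)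
  have harctan : HasDerivAt (fun x : ℝ => Real.arctan (x / Real.sqrt (L ^ 2 - x ^ 2)))
      ((1 / (1 + (r / s) ^ 2)) * ((1 * s - r * (-(2 * r) / (2 * s))) / s ^ 2)) r := by
    have := (Real.hasDerivAt_arctan (r / s)).comp r hu
    simpa [Function.comp_def] using this
  have hprod : HasDerivAt (fun x : ℝ => x / 4 * Real.sqrt (L ^ 2 - x ^ 2))
      ((1 / 4) * s + r / 4 * (-(2 * r) / (2 * s))) r := by
    have h14 : HasDerivAt (fun x : ℝ => x / 4) (1 / 4) r := by
      simpa using (hasDerivAt_id r).div_const 4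
    simpa [Pi.mul_def, ← hs] using h14.mul hsqrt
  have hφ : HasDerivAt (bubbleProfile L)
      (0 - L ^ 2 / 4 * ((1 / (1 + (r / s) ^ 2)) * ((1 * s - r * (-(2 * r) / (2 * s))) / s ^ 2))
        + ((1 / 4) * s + r / 4 * (-(2 * r) / (2 * s)))) r :=
    ((hasDerivAt_const r (L ^ 2 * π / 8)).sub (harctan.const_mul (L ^ 2 / 4))).add hprod
  convert hφ using 1
  have h1 : 1 + (r / s) ^ 2 = L ^ 2 / s ^ 2 := by
    field_simp
    linarith [hs2]
  have hL0 : L ≠ 0 := by nlinarith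
  rw [h1]
  field_simp
  nlinarith [hs2, hspos, sq_nonneg s]

noncomputable def coordX (j : Fin 2) : ((Fin 2 → ℝ) × (Fin 2 → ℝ) × ℝ) →L[ℝ] ℝ :=
  (ContinuousLinearMap.proj j).comp (ContinuousLinearMap.fst ℝ (Fin 2 → ℝ) ((Fin 2 → ℝ) × ℝ))

noncomputable def coordY (j : Fin 2) : ((Fin 2 → ℝ) × (Fin 2 → ℝ) × ℝ) →L[ℝ] ℝ :=
  (ContinuousLinearMap.proj j).comp ((ContinuousLinearMap.fst ℝ (Fin 2 → ℝ) ℝ).comp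
    (ContinuousLinearMap.snd ℝ (Fin 2 → ℝ) ((Fin 2 → ℝ) × ℝ)))

noncomputable def coordT : ((Fin 2 → ℝ) × (Fin 2 → ℝ) × ℝ) →L[ℝ] ℝ :=
  (ContinuousLinearMap.snd ℝ (Fin 2 → ℝ) ℝ).comp
    (ContinuousLinearMap.snd ℝ (Fin 2 → ℝ) ((Fin 2 → ℝ) × ℝ))

noncomputable def DQ (p : (Fin 2 → ℝ) × (Fin 2 → ℝ) × ℝ) :
    ((Fin 2 → ℝ) × (Fin 2 → ℝ) × ℝ) →L[ℝ] ℝ :=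
  ∑ j : Fin 2, ((2 * p.1 j) • coordX j + (2 * p.2.1 j) • coordY j)

lemma hasFDerivAt_Q (p : (Fin 2 → ℝ) × (Fin 2 → ℝ) × ℝ) :
    HasFDerivAt (fun q : (Fin 2 → ℝ) × (Fin 2 → ℝ) × ℝ =>
      ∑ j : Fin 2, ((q.1 j) ^ 2 + (q.2.1 j) ^ 2)) (DQ p) p := by
  apply HasFDerivAt.fun_sum
  intro j _
  have hx : HasFDerivAt (fun q : (Fin 2 → ℝ) × (Fin 2 → ℝ) × ℝ => q.1 j) (coordX j) p :=
    (coordX j).hasFDerivAt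
  have hy : HasFDerivAt (fun q : (Fin 2 → ℝ) × (Fin 2 → ℝ) × ℝ => q.2.1 j) (coordY j) p :=
    (coordY j).hasFDerivAt
  have hx2 : HasFDerivAt (fun q : (Fin 2 → ℝ) × (Fin 2 → ℝ) × ℝ => q.1 j * q.1 j)
      ((2 * p.1 j) • coordX j) p := by
    have h := hx.mul hx
    rw [two_mul, add_smul]
    exact h
  have hy2 : HasFDerivAt (fun q : (Fin 2 → ℝ) × (Fin 2 → ℝ) × ℝ => q.2.1 j * q.2.1 j)
      ((2 * p.2.1 j) • coordY j) p := by
    have h := hy.mul hy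
    rw [two_mul, add_smul]
    exact h
  simpa [pow_two, Pi.add_def] using hx2.add hy2

lemma hasFDerivAt_heisR (p : (Fin 2 → ℝ) × (Fin 2 → ℝ) × ℝ) (hr0 : 0 < heisR p) :
    HasFDerivAt heisR ((1 / (2 * heisR p)) • DQ p) p := by
  have hQ0 : (∑ j : Fin 2, ((p.1 j) ^ 2 + (p.2.1 j) ^ 2)) ≠ 0 := by
    intro h
    rw [heisR, h, Real.sqrt_zero] at hr0
    exact lt_irrefl 0 hr0
  exact (Real.hasDerivAt_sqrt hQ0).comp_hasFDerivAt p (hasFDerivAt_Q p)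

lemma bubble_fderiv (L : ℝ) (hL : 0 < L) (p : (Fin 2 → ℝ) × (Fin 2 → ℝ) × ℝ)
    (hr0 : 0 < heisR p) (hrL : heisR p < L) :
    fderiv ℝ (bubbleDefFn L) p
      = coordT - (-((heisR p) ^ 2) / (2 * Real.sqrt (L ^ 2 - (heisR p) ^ 2)))
          • ((1 / (2 * heisR p)) • DQ p) := by
  have hT : HasFDerivAt (fun q : (Fin 2 → ℝ) × (Fin 2 → ℝ) × ℝ => q.2.2) coordT p :=
    coordT.hasFDerivAt
  have hφ := (bubbleProfile_hasDerivAt L (heisR p) hr0 hrL).comp_hasFDerivAt p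
    (hasFDerivAt_heisR p hr0)
  exact (hT.sub hφ).fderiv

/-- For the bubble set in ℍ², the horizontal gradient norm of the defining
function is W = L r / (2√(L²−r²)). -/
theorem bubble_horizontal_gradient_norm
    (L : ℝ) (hL : 0 < L) (p : (Fin 2 → ℝ) × (Fin 2 → ℝ) × ℝ)
    (hr0 : 0 < heisR p) (hrL : heisR p < L) :
    Real.sqrt (∑ j : Fin 2,
        ((fderiv ℝ (bubbleDefFn L) p (heisXdir j p)) ^ 2
          + (fderiv ℝ (bubbleDefFn L) p (heisYdir j p)) ^ 2))
      = L * heisR p / (2 * Real.sqrt (L ^ 2 - (heisR p) ^ 2)) := by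
  set r := heisR p with hrdef
  set s := Real.sqrt (L ^ 2 - r ^ 2) with hsdef
  have hpos : 0 < L ^ 2 - r ^ 2 := by nlinarith
  have hspos : 0 < s := Real.sqrt_pos.mpr hpos
  have hs2 : s ^ 2 = L ^ 2 - r ^ 2 := Real.sq_sqrt hpos.le
  have hr2 : r ^ 2 = ∑ j : Fin 2, ((p.1 j) ^ 2 + (p.2.1 j) ^ 2) := by
    rw [hrdef, heisR, Real.sq_sqrt]
    positivity
  rw [bubble_fderiv L hL p hr0 hrL]
  have happX : ∀ j : Fin 2,
      (coordT - (-(r ^ 2) / (2 * s)) • ((1 / (2 * r)) • DQ p)) (heisXdir j p)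
        = -(p.2.1 j) / 2 + r * p.1 j / (2 * s) := by
    intro j
    have hDQ : DQ p (heisXdir j p) = 2 * p.1 j := by
      simp [DQ, coordX, coordY, heisXdir, Fin.sum_univ_two, Pi.single_apply]
      fin_cases j <;> simp
    simp only [ContinuousLinearMap.sub_apply, ContinuousLinearMap.smul_apply, hDQ,
      smul_eq_mul]
    have hc : coordT (heisXdir j p) = -(p.2.1 j) / 2 := by
      simp [coordT, heisXdir]
    rw [hc]
    field_simp
    ring
  have happY : ∀ j : Fin 2,
      (coordT - (-(r ^ 2) / (2 * s)) • ((1 / (2 * r)) • DQ p)) (heisYdir j p)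
        = p.1 j / 2 + r * p.2.1 j / (2 * s) := by
    intro j
    have hDQ : DQ p (heisYdir j p) = 2 * p.2.1 j := by
      simp [DQ, coordX, coordY, heisYdir, Fin.sum_univ_two, Pi.single_apply]
      fin_cases j <;> simp
    simp only [ContinuousLinearMap.sub_apply, ContinuousLinearMap.smul_apply, hDQ,
      smul_eq_mul]
    have hc : coordT (heisYdir j p) = p.1 j / 2 := by
      simp [coordT, heisYdir]
    rw [hc]
    field_simp
    ring
  simp only [← hrdef, ← hsdef, happX, happY]
  have hsum : (∑ j : Fin 2, ((-(p.2.1 j) / 2 + r * p.1 j / (2 * s)) ^ 2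
      + (p.1 j / 2 + r * p.2.1 j / (2 * s)) ^ 2)) = (L * r / (2 * s)) ^ 2 := by
    rw [Fin.sum_univ_two]
    have hr2' : r ^ 2 = (p.1 0) ^ 2 + (p.2.1 0) ^ 2 + ((p.1 1) ^ 2 + (p.2.1 1) ^ 2) := by
      rw [hr2, Fin.sum_univ_two]
    field_simp
    linear_combination (-(s^2+r^2)) * hr2' + (r^2) * hs2
  rw [hsum, Real.sqrt_sq (by positivity)]
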